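/- Let X be a CAT(0) cube complex of dimension D and flatness f. Suppose every monochromatic inward geodesic s has its crossed hyperplanes partitioned into at most D chains, and along any chain in a totally bound inward geodesic the rank-vector takes at most 3^{f-1} values, while consecutive elements of a maximal chain in a monochromatic geodesic have strictly decreasing rank-vectors. Then no monochromatic inward geodesic has length greater than 3^{f-1}·D; i.e. the colouring is 3^{f-1}D-controlled. -/

import Mathlib

/-- The lexicographic linear order on `ℕ^n`, used for rank-vectors. -/
noncomputable instance lexNatLinearOrder (n : ℕ) : LinearOrder (Lex (Fin n → ℕ)) :=
  letI h : WellFoundedLT (Fin n) := inferInstance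
  @Pi.Lex.linearOrder (Fin n) (fun _ => ℕ) _ h _

/-- Abstract form of the colouring theorem, applied to an arbitrary monochromatic inward
geodesic of a CAT(0) cube complex of dimension `D` and flatness `f`.  Here `S` is the (finite)
set of hyperplanes crossed by the geodesic, so `S.card` is its length; `lt` is the separation
order on hyperplanes and `r` the rank-vector function.  Assume: the hyperplanes of `S` can be
partitioned into at most `D` chains; along any chain in `S` the rank-vector takes at most
`3^(f-1)` values (since the geodesic is totally bound); and consecutive elements of any maximal
chain in `S` have strictly decreasing rank-vectors.  Then the geodesic has length at most
`3^(f-1) * D`. -/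
theorem stmt19 {H : Type*} (D f : ℕ) (lt : H → H → Prop)
    (hirr : ∀ h, ¬ lt h h) (htrans : ∀ {a b c}, lt a b → lt b c → lt a c)
    (r : H → Lex (Fin (D - 1) → ℕ))
    (S : Finset H)
    (hpartition : ∃ col : H → Fin D, ∀ h ∈ S, ∀ k ∈ S,
      h ≠ k → col h = col k → (lt h k ∨ lt k h))
    (hvalues : ∀ C : Finset H, C ⊆ S → IsChain lt ↑C → (r '' ↑C).ncard ≤ 3 ^ (f - 1))
    (hdec : ∀ C : Finset H, C ⊆ S → IsChain lt ↑C →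
      (∀ C' : Finset H, C' ⊆ S → IsChain lt ↑C' → C ⊆ C' → C = C') →
      ∀ h ∈ C, ∀ k ∈ C, lt k h → (¬ ∃ j ∈ C, lt k j ∧ lt j h) → r k < r h) :
    S.card ≤ 3 ^ (f - 1) * D := by
  classical
  obtain ⟨col, hcol⟩ := hpartition
  -- Every chain in S extends to a maximal chain in S.
  have hext : ∀ C : Finset H, C ⊆ S → IsChain lt ↑C →
      ∃ M : Finset H, C ⊆ M ∧ M ⊆ S ∧ IsChain lt ↑M ∧
        (∀ C' : Finset H, C' ⊆ S → IsChain lt ↑C' → M ⊆ C' → M = C') := by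
    intro C hCS hCch
    obtain ⟨M, hM, hMmax⟩ := Finset.exists_max_image
      (S.powerset.filter (fun C' => C ⊆ C' ∧ IsChain lt ↑C')) Finset.card
      ⟨C, by simp [hCS, hCch]⟩
    simp only [Finset.mem_filter, Finset.mem_powerset] at hM
    refine ⟨M, hM.2.1, hM.1, hM.2.2, ?_⟩
    intro C' hC'S hC'ch hMC'
    have hmem : C' ∈ S.powerset.filter (fun C' => C ⊆ C' ∧ IsChain lt ↑C') := by
      simp only [Finset.mem_filter, Finset.mem_powerset]
      exact ⟨hC'S, hM.2.1.trans hMC', hC'ch⟩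
    exact Finset.eq_of_subset_of_card_le hMC' (hMmax C' hmem)
  -- In a maximal chain, r is strictly monotone.
  have hmono : ∀ M : Finset H, M ⊆ S → IsChain lt ↑M →
      (∀ C' : Finset H, C' ⊆ S → IsChain lt ↑C' → M ⊆ C' → M = C') →
      ∀ h ∈ M, ∀ k ∈ M, lt k h → r k < r h := by
    intro M hMS hMch hMmax
    have key : ∀ n : ℕ, ∀ h ∈ M, ∀ k ∈ M, lt k h →
        (M.filter (fun j => lt k j ∧ lt j h)).card = n → r k < r h := by
      intro n
      induction n using Nat.strong_induction_on with
      | _ n IH =>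
        intro h hh k hk hkh hcard
        rcases eq_or_ne n 0 with hn | hn
        · apply hdec M hMS hMch hMmax h hh k hk hkh
          rintro ⟨j, hj, hkj, hjh⟩
          have : j ∈ M.filter (fun j => lt k j ∧ lt j h) := by
            simp [hj, hkj, hjh]
          rw [hn, Finset.card_eq_zero] at hcard
          rw [hcard] at this
          exact Finset.notMem_empty _ this
        · obtain ⟨j, hj⟩ := Finset.card_pos.mp (by omega : 0 < (M.filter (fun j => lt k j ∧ lt j h)).card)
          simp only [Finset.mem_filter] at hj
          obtain ⟨hjM, hkj, hjh⟩ := hj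
          have hsub1 : M.filter (fun i => lt k i ∧ lt i j) ⊂ M.filter (fun j => lt k j ∧ lt j h) := by
            constructor
            · intro i hi
              simp only [Finset.mem_filter] at hi ⊢
              exact ⟨hi.1, hi.2.1, htrans hi.2.2 hjh⟩
            · intro hs
              have := hs (by simp [hjM, hkj, hjh] : j ∈ M.filter (fun j => lt k j ∧ lt j h))
              simp only [Finset.mem_filter] at this
              exact hirr j this.2.2
          have hsub2 : M.filter (fun i => lt j i ∧ lt i h) ⊂ M.filter (fun j => lt k j ∧ lt j h) := by
            constructor
            · intro i hi
              simp only [Finset.mem_filter] at hi ⊢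
              exact ⟨hi.1, htrans hkj hi.2.1, hi.2.2⟩
            · intro hs
              have := hs (by simp [hjM, hkj, hjh] : j ∈ M.filter (fun j => lt k j ∧ lt j h))
              simp only [Finset.mem_filter] at this
              exact hirr j this.2.1
          have h1 : r k < r j := IH _ (hcard ▸ Finset.card_lt_card hsub1) j hjM k hk hkj rfl
          have h2 : r j < r h := IH _ (hcard ▸ Finset.card_lt_card hsub2) h hh j hjM hjh rfl
          exact h1.trans h2
    intro h hh k hk hkh
    exact key _ h hh k hk hkh rfl
  -- Each colour class has at most 3^(f-1) elements.
  have hclass : ∀ c : Fin D, (S.filter (fun h => col h = c)).card ≤ 3 ^ (f - 1) := by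
    intro c
    set C := S.filter (fun h => col h = c) with hC
    have hCS : C ⊆ S := Finset.filter_subset _ _
    have hCch : IsChain lt ↑C := by
      intro a ha b hb hab
      simp only [hC, Finset.coe_filter, Set.mem_setOf_eq] at ha hb
      exact hcol a ha.1 b hb.1 hab (ha.2.trans hb.2.symm)
    obtain ⟨M, hCM, hMS, hMch, hMmax⟩ := hext C hCS hCch
    have hinj : Set.InjOn r ↑C := by
      intro a ha b hb hab
      by_contra hne
      rcases hCch ha hb hne with hlt | hlt
      · exact absurd hab (ne_of_gt (hmono M hMS hMch hMmax b (hCM hb) a (hCM ha) hlt)).symm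
      · exact absurd hab (ne_of_lt (hmono M hMS hMch hMmax a (hCM ha) b (hCM hb) hlt)).symm
    calc C.card = (↑C : Set H).ncard := (Set.ncard_coe_finset C).symm
      _ = (r '' ↑C).ncard := (Set.ncard_image_of_injOn hinj).symm
      _ ≤ 3 ^ (f - 1) := hvalues C hCS hCch
  have hsum : S.card = ∑ c : Fin D, (S.filter (fun h => col h = c)).card :=
    Finset.card_eq_sum_card_fiberwise (fun h _ => Finset.mem_univ (col h))
  rw [hsum]
  calc ∑ c : Fin D, (S.filter (fun h => col h = c)).card
      ≤ ∑ _c : Fin D, 3 ^ (f - 1) := Finset.sum_le_sum fun c _ => hclass c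
    _ = 3 ^ (f - 1) * D := by simp [mul_comm]
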